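/- The set M_{t_j} = { x ∈ ℝ⁴ : x₁x₂ + βx₃x₄ = 0 and q_{t_j}(x) ≠ 0 } is a group under the generalized bicomplex product: it contains the identity e = (1,0,0,0), it is closed under the product, and every x ∈ M_{t_j} has inverse x⁻¹ = (1/q_{t_j}(x))·(x₁, x₂, −x₃, −x₄), which again lies in M_{t_j}. -/

import Mathlib

/-- The generalized bicomplex product on ℝ⁴ with parameters α, β. -/
def gbmul (α β : ℝ) (x y : ℝ × ℝ × ℝ × ℝ) : ℝ × ℝ × ℝ × ℝ :=
  (x.1 * y.1 - α * x.2.1 * y.2.1 - β * x.2.2.1 * y.2.2.1 + α * β * x.2.2.2 * y.2.2.2,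
   x.1 * y.2.1 + x.2.1 * y.1 - β * x.2.2.1 * y.2.2.2 - β * x.2.2.2 * y.2.2.1,
   x.1 * y.2.2.1 + x.2.2.1 * y.1 - α * x.2.1 * y.2.2.2 - α * x.2.2.2 * y.2.1,
   x.1 * y.2.2.2 + x.2.2.2 * y.1 + x.2.1 * y.2.2.1 + x.2.2.1 * y.2.1)

/-- The quadratic form associated with the conjugation. -/
def qTj (α β : ℝ) (x : ℝ × ℝ × ℝ × ℝ) : ℝ := x.1 ^ 2 - α * x.2.1 ^ 2 + β * x.2.2.1 ^ 2 - α * β * x.2.2.2 ^ 2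

/-- The hyperquadric is a group under the generalized bicomplex product: it
contains the identity `(1,0,0,0)`, is closed under the product, and every
element has a two-sided inverse (again lying in the hyperquadric) given by the
scaled conjugate. -/
theorem hyperquadric_group (α β : ℝ) :
    let M : Set (ℝ × ℝ × ℝ × ℝ) :=
      {x | x.1 * x.2.1 + β * x.2.2.1 * x.2.2.2 = 0 ∧ qTj α β x ≠ 0}
    let e : ℝ × ℝ × ℝ × ℝ := (1, 0, 0, 0)
    e ∈ M ∧
    (∀ x ∈ M, ∀ y ∈ M, gbmul α β x y ∈ M) ∧
    (∀ x ∈ M,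
      ((qTj α β x)⁻¹ • ((x.1, x.2.1, -x.2.2.1, -x.2.2.2) : ℝ × ℝ × ℝ × ℝ)) ∈ M ∧
      gbmul α β x ((qTj α β x)⁻¹ • ((x.1, x.2.1, -x.2.2.1, -x.2.2.2) : ℝ × ℝ × ℝ × ℝ)) = e ∧
      gbmul α β ((qTj α β x)⁻¹ • ((x.1, x.2.1, -x.2.2.1, -x.2.2.2) : ℝ × ℝ × ℝ × ℝ)) x = e) := by
  intro M e
  refine ⟨⟨by simp [e], by simp [qTj, e]⟩, ?_, ?_⟩
  · rintro ⟨x1, x2, x3, x4⟩ ⟨hx, hqx⟩ ⟨y1, y2, y3, y4⟩ ⟨hy, hqy⟩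
    simp only [qTj, Set.mem_setOf_eq] at *
    constructor
    · simp only [gbmul]
      linear_combination (y1 ^ 2 - α * y2 ^ 2 + β * y3 ^ 2 - α * β * y4 ^ 2) * hx +
        (x1 ^ 2 - α * x2 ^ 2 + β * x3 ^ 2 - α * β * x4 ^ 2) * hy
    · have h : qTj α β (gbmul α β (x1, x2, x3, x4) (y1, y2, y3, y4)) =
          (x1 ^ 2 - α * x2 ^ 2 + β * x3 ^ 2 - α * β * x4 ^ 2) *
          (y1 ^ 2 - α * y2 ^ 2 + β * y3 ^ 2 - α * β * y4 ^ 2) := by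
        simp only [qTj, gbmul]
        linear_combination (-4 * α * (y1 * y2 + β * y3 * y4)) * hx
      rw [h]
      exact mul_ne_zero hqx hqy
  · rintro ⟨x1, x2, x3, x4⟩ ⟨hx, hqx⟩
    simp only [qTj, Set.mem_setOf_eq] at *
    set q : ℝ := x1 ^ 2 - α * x2 ^ 2 + β * x3 ^ 2 - α * β * x4 ^ 2 with hq
    have hinv := inv_mul_cancel₀ hqx
    refine ⟨⟨?_, ?_⟩, ?_, ?_⟩
    · simp only [Prod.smul_def, smul_eq_mul]
      linear_combination q⁻¹ * q⁻¹ * hx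
    · simp only [Prod.smul_def, smul_eq_mul, qTj]
      have h : (q⁻¹ * x1) ^ 2 - α * (q⁻¹ * x2) ^ 2 + β * (q⁻¹ * -x3) ^ 2 -
          α * β * (q⁻¹ * -x4) ^ 2 = q⁻¹ * q⁻¹ * q := by
        linear_combination (-(q⁻¹ * q⁻¹)) * hq
      rw [h]
      exact mul_ne_zero (mul_ne_zero (inv_ne_zero hqx) (inv_ne_zero hqx)) hqx
    · simp only [gbmul, Prod.smul_def, smul_eq_mul, e, Prod.mk.injEq]
      exact ⟨by linear_combination hinv - q⁻¹ * hq, by linear_combination 2 * q⁻¹ * hx,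
        by ring, by ring⟩
    · simp only [gbmul, Prod.smul_def, smul_eq_mul, e, Prod.mk.injEq]
      exact ⟨by linear_combination hinv - q⁻¹ * hq, by linear_combination 2 * q⁻¹ * hx,
        by ring, by ring⟩
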